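/- Let a₁, a₂ > 0, b₁ < 0, b₂ ∈ ℝ, c > 0, and suppose b₁²/a₁² + b₂²/a₂² > c². Then there exists a unique λ* > 0 satisfying b₁²(a₂ + 2λ)² + b₂²(a₁ + 2λ)² = c²(a₁ + 2λ)²(a₂ + 2λ)², and the point (p*, q*) = (−b₁/(a₁ + 2λ*), −b₂/(a₂ + 2λ*)) minimizes (a₁/2)p² + b₁p + (a₂/2)q² + b₂q subject to p² + q² ≤ c² and p ≥ 0. -/

import Mathlib

lemma stmt5_aux (a1 a2 b1 b2 c l : ℝ) (hA : 0 < a1+2*l) (hB : 0 < a2+2*l) :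
    (b1^2*(a2+2*l)^2 + b2^2*(a1+2*l)^2 = c^2*(a1+2*l)^2*(a2+2*l)^2) ↔
    b1^2/(a1+2*l)^2 + b2^2/(a2+2*l)^2 = c^2 := by
  rw [div_add_div _ _ (by positivity) (by positivity), div_eq_iff (by positivity)]
  constructor <;> intro h <;> linear_combination h

lemma stmt5_mono (a1 a2 b1 b2 : ℝ) (ha1 : 0 < a1) (ha2 : 0 < a2) (hb1 : b1 < 0)
    {l l' : ℝ} (hl : 0 ≤ l) (hll : l < l') :
    b1^2/(a1+2*l')^2 + b2^2/(a2+2*l')^2 < b1^2/(a1+2*l)^2 + b2^2/(a2+2*l)^2 := by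
  have hb1sq : 0 < b1^2 := by nlinarith
  have hsq : (a1+2*l)^2 < (a1+2*l')^2 := by nlinarith
  have hsq2 : (a2+2*l)^2 ≤ (a2+2*l')^2 := by nlinarith
  have h1 : b1^2/(a1+2*l')^2 < b1^2/(a1+2*l)^2 := by
    rw [div_lt_div_iff₀ (pow_pos (by linarith) 2) (pow_pos (by linarith) 2)]
    exact mul_lt_mul_of_pos_left hsq hb1sq
  have h2 : b2^2/(a2+2*l')^2 ≤ b2^2/(a2+2*l)^2 := by
    rw [div_le_div_iff₀ (pow_pos (by linarith) 2) (pow_pos (by linarith) 2)]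
    exact mul_le_mul_of_nonneg_left hsq2 (sq_nonneg b2)
  linarith

theorem stmt5 (a1 a2 b1 b2 c : ℝ) (ha1 : 0 < a1) (ha2 : 0 < a2) (hb1 : b1 < 0) (hc : 0 < c)
    (hout : b1^2/a1^2 + b2^2/a2^2 > c^2)
    (f : ℝ → ℝ → ℝ) (hf : ∀ p q, f p q = a1/2*p^2 + b1*p + a2/2*q^2 + b2*q) :
    (∃! l : ℝ, 0 < l ∧
        b1^2*(a2+2*l)^2 + b2^2*(a1+2*l)^2 = c^2*(a1+2*l)^2*(a2+2*l)^2) ∧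
    ∀ l : ℝ, (0 < l ∧
        b1^2*(a2+2*l)^2 + b2^2*(a1+2*l)^2 = c^2*(a1+2*l)^2*(a2+2*l)^2) →
      ((-b1/(a1+2*l))^2 + (-b2/(a2+2*l))^2 ≤ c^2 ∧ 0 ≤ -b1/(a1+2*l) ∧
        ∀ p q : ℝ, p^2 + q^2 ≤ c^2 → 0 ≤ p →
          f (-b1/(a1+2*l)) (-b2/(a2+2*l)) ≤ f p q) := by
  have hb1sq : 0 < b1^2 := by nlinarith
  set g : ℝ → ℝ := fun l => b1^2/(a1+2*l)^2 + b2^2/(a2+2*l)^2 with hg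
  constructor
  · -- existence and uniqueness
    have hSnum : 0 < b1^2 + b2^2 := by nlinarith [sq_nonneg b2]
    set S : ℝ := (b1^2+b2^2)/c^2 with hSdef
    have hS : 0 < S := by positivity
    set L : ℝ := S + 1 with hLdef
    have hA2 : 2*S < (a1+2*L)^2 := by nlinarith
    have hB2 : 2*S < (a2+2*L)^2 := by nlinarith
    have hgL : g L < c^2 := by
      have h1 : b1^2/(a1+2*L)^2 < b1^2/(2*S) := by
        rw [div_lt_div_iff₀ (by positivity) (by linarith)]
        nlinarith
      have h2 : b2^2/(a2+2*L)^2 ≤ b2^2/(2*S) := by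
        rw [div_le_div_iff₀ (by positivity) (by linarith)]
        nlinarith [sq_nonneg b2]
      have hsum : b1^2/(2*S) + b2^2/(2*S) = c^2/2 := by
        rw [← add_div, hSdef]
        field_simp
      have hc2 : 0 < c^2 := by positivity
      have h3 : g L < c^2/2 := by
        show b1^2/(a1+2*L)^2 + b2^2/(a2+2*L)^2 < c^2/2
        linarith
      exact h3.trans (half_lt_self hc2)
    have hg0 : c^2 < g 0 := by
      simp only [hg]
      norm_num
      linarith [hout]
    have hcont : ContinuousOn g (Set.Icc 0 L) := by
      apply ContinuousOn.add <;>
      · apply ContinuousOn.div continuousOn_const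
        · fun_prop
        · intro x hx
          have := hx.1
          positivity
    have hLpos : (0:ℝ) ≤ L := by linarith
    obtain ⟨l, hlmem, hgl⟩ := intermediate_value_Icc' hLpos hcont ⟨le_of_lt hgL, le_of_lt hg0⟩
    have hlpos : 0 < l := by
      rcases lt_or_eq_of_le hlmem.1 with h | h
      · exact h
      · exfalso; rw [← h] at hgl; linarith
    refine ⟨l, ⟨hlpos, ?_⟩, ?_⟩
    · exact (stmt5_aux a1 a2 b1 b2 c l (by linarith) (by linarith)).2 hgl
    · rintro l' ⟨hl'pos, heq'⟩
      have hgl' : g l' = c^2 :=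
        (stmt5_aux a1 a2 b1 b2 c l' (by linarith) (by linarith)).1 heq'
      by_contra hne
      rcases lt_or_gt_of_ne hne with h | h
      · have := stmt5_mono a1 a2 b1 b2 ha1 ha2 hb1 (le_of_lt hl'pos) h
        simp only [hg] at hgl hgl'
        linarith
      · have := stmt5_mono a1 a2 b1 b2 ha1 ha2 hb1 (le_of_lt hlpos) h
        simp only [hg] at hgl hgl'
        linarith
  · rintro l ⟨hlpos, heq⟩
    have hA : 0 < a1 + 2*l := by linarith
    have hB : 0 < a2 + 2*l := by linarith
    have hgl : b1^2/(a1+2*l)^2 + b2^2/(a2+2*l)^2 = c^2 :=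
      (stmt5_aux a1 a2 b1 b2 c l hA hB).1 heq
    have e1 : (-b1/(a1+2*l))^2 = b1^2/(a1+2*l)^2 := by
      rw [div_pow, neg_pow]; ring_nf
    have e2 : (-b2/(a2+2*l))^2 = b2^2/(a2+2*l)^2 := by
      rw [div_pow, neg_pow]; ring_nf
    have hPQ : (-b1/(a1+2*l))^2 + (-b2/(a2+2*l))^2 = c^2 := by
      rw [e1, e2]; exact hgl
    refine ⟨le_of_eq hPQ, div_nonneg (by linarith) hA.le, ?_⟩
    intro p q hpq hp
    rw [hf, hf]
    set P : ℝ := -b1/(a1+2*l) with hPdef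
    set Q : ℝ := -b2/(a2+2*l) with hQdef
    have hP : (a1+2*l)*P = -b1 := by
      rw [hPdef, mul_div_assoc', mul_comm, ← mul_div_assoc', div_self hA.ne', mul_one]
    have hQ : (a2+2*l)*Q = -b2 := by
      rw [hQdef, mul_div_assoc', mul_comm, ← mul_div_assoc', div_self hB.ne', mul_one]
    clear_value P Q
    have key : a1/2*p^2 + b1*p + a2/2*q^2 + b2*q -
        (a1/2*P^2 + b1*P + a2/2*Q^2 + b2*Q) =
        (a1+2*l)/2*(p-P)^2 + (a2+2*l)/2*(q-Q)^2 + l*(c^2 - p^2 - q^2) := by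
      linear_combination (p - P) * hP + (q - Q) * hQ + l * hPQ
    have t1 : 0 ≤ (a1+2*l)/2*(p-P)^2 := by positivity
    have t2 : 0 ≤ (a2+2*l)/2*(q-Q)^2 := by positivity
    have t3 : 0 ≤ l*(c^2 - p^2 - q^2) := mul_nonneg hlpos.le (by linarith)
    linarith
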